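/- The generating function of partitions into nonnegative parts where the smallest part occurs exactly m times and all other parts occur fewer than m times is ∑_{n≥0} D_m(n) q^n = ∑_{j≥0} q^{mj} · (q^{m(j+1)}; q^m)_∞ / (q^{j+1}; q)_∞. -/

import Mathlib

open PowerSeries

noncomputable instance : TopologicalSpace (PowerSeries ℂ) :=
  inferInstanceAs (TopologicalSpace ((Unit →₀ ℕ) → ℂ))

/-- The formal variable `q`. -/
noncomputable def q : PowerSeries ℂ := PowerSeries.X

/-- Finite q-Pochhammer symbol `(a; b)_n = ∏_{i=0}^{n-1} (1 - a bⁱ)`. -/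
noncomputable def poch (a b : PowerSeries ℂ) (n : ℕ) : PowerSeries ℂ :=
  ∏ i ∈ Finset.range n, (1 - a * b ^ i)

/-- Infinite q-Pochhammer symbol `(a; b)_∞ = ∏_{i≥0} (1 - a bⁱ)`. -/
noncomputable def pochInf (a b : PowerSeries ℂ) : PowerSeries ℂ :=
  ∏' i : ℕ, (1 - a * b ^ i)

/-- `Dm m n`: number of partitions of `n` into nonnegative parts (0 allowed) whose
smallest part occurs exactly `m` times and every other part occurs fewer than `m` times. -/
noncomputable def Dm (m n : ℕ) : ℕ :=
  Nat.card {s : Multiset ℕ // s.sum = n ∧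
    ∃ a ∈ s, s.count a = m ∧ (∀ b ∈ s, a ≤ b) ∧ ∀ b ∈ s, b ≠ a → s.count b < m}

namespace DmAux

open Finset Filter

lemma q_eq : q = (X : PowerSeries ℂ) := rfl

instance : T2Space (PowerSeries ℂ) := inferInstanceAs (T2Space ((Unit →₀ ℕ) → ℂ))

lemma apply_eq_coeff (f : PowerSeries ℂ) (d : Unit →₀ ℕ) : f d = coeff (d ()) f := by
  conv_lhs => rw [Finsupp.unique_single d]
  rfl

/-- truncated-to-one predicate -/
def Trunc1 (K : ℕ) (A : PowerSeries ℂ) : Prop := ∀ k ≤ K, coeff k A = coeff k 1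

lemma trunc1_one (K : ℕ) : Trunc1 K 1 := fun _ _ => rfl

lemma coeff_mul_trunc1 {K : ℕ} {B : PowerSeries ℂ} (hB : Trunc1 K B) (A : PowerSeries ℂ) :
    coeff K (A * B) = coeff K A := by
  rw [PowerSeries.coeff_mul]
  have h : ∀ p ∈ Finset.HasAntidiagonal.antidiagonal K, coeff p.1 A * coeff p.2 B
      = if p = (K, 0) then coeff K A else 0 := by
    rintro ⟨a, b⟩ hp
    rw [Finset.HasAntidiagonal.mem_antidiagonal] at hp
    by_cases hb : b = 0
    · subst hb
      simp only [add_zero] at hp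
      subst hp
      rw [hB 0 (Nat.zero_le _), PowerSeries.coeff_one]
      simp
    · rw [hB b (by omega), PowerSeries.coeff_one, if_neg hb, mul_zero, if_neg]
      simp only [Prod.mk.injEq, not_and]
      intro _; exact hb
  rw [Finset.sum_congr rfl h, Finset.sum_ite_eq', if_pos (by simp [Finset.HasAntidiagonal.mem_antidiagonal])]

lemma trunc1_mul {K : ℕ} {A B : PowerSeries ℂ} (hA : Trunc1 K A) (hB : Trunc1 K B) :
    Trunc1 K (A * B) := by
  intro k hk
  have h1 : Trunc1 k B := fun k' hk' => hB k' (hk'.trans hk)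
  rw [coeff_mul_trunc1 h1, hA k hk]

lemma trunc1_prod {K : ℕ} {S : Finset ℕ} {G : ℕ → PowerSeries ℂ}
    (h : ∀ i ∈ S, Trunc1 K (G i)) : Trunc1 K (∏ i ∈ S, G i) :=
  Finset.prod_induction G (Trunc1 K) (fun _ _ => trunc1_mul) (trunc1_one K) h

lemma coeff_mul_congr {K : ℕ} {A A' B B' : PowerSeries ℂ}
    (hA : ∀ k ≤ K, coeff k A = coeff k A') (hB : ∀ k ≤ K, coeff k B = coeff k B') :
    coeff K (A * B) = coeff K (A' * B') := by
  rw [PowerSeries.coeff_mul, PowerSeries.coeff_mul]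
  refine Finset.sum_congr rfl fun p hp => ?_
  rw [Finset.HasAntidiagonal.mem_antidiagonal] at hp
  rw [hA p.1 (by omega), hB p.2 (by omega)]

def Tame (G : ℕ → PowerSeries ℂ) : Prop := ∀ i, Trunc1 i (G i)

lemma coeff_prod_subset {G : ℕ → PowerSeries ℂ} (hG : Tame G) {n : ℕ} {S : Finset ℕ}
    (hS : Finset.range (n+1) ⊆ S) :
    coeff n (∏ i ∈ S, G i) = coeff n (∏ i ∈ Finset.range (n+1), G i) := by
  rw [← Finset.prod_sdiff hS, mul_comm]
  refine coeff_mul_trunc1 (trunc1_prod fun i hi => ?_) _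
  have hi' : n < i := by
    have h2 := (Finset.mem_sdiff.mp hi).2
    simp only [Finset.mem_range] at h2; omega
  exact fun k hk => hG i k (by omega)

noncomputable def PInf (G : ℕ → PowerSeries ℂ) : PowerSeries ℂ :=
  PowerSeries.mk fun n => coeff n (∏ i ∈ Finset.range (n+1), G i)

lemma coeff_PInf {G : ℕ → PowerSeries ℂ} (hG : Tame G) {n : ℕ} {S : Finset ℕ}
    (hS : Finset.range (n+1) ⊆ S) :
    coeff n (PInf G) = coeff n (∏ i ∈ S, G i) := by
  rw [PInf, PowerSeries.coeff_mk]
  exact (coeff_prod_subset hG hS).symm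

lemma hasProd_PInf {G : ℕ → PowerSeries ℂ} (hG : Tame G) : HasProd G (PInf G) := by
  have h : Tendsto (fun S : Finset ℕ => ∏ i ∈ S, G i) atTop (nhds (PInf G)) := by
    refine tendsto_pi_nhds.mpr fun d => ?_
    refine tendsto_atTop_of_eventually_const (i₀ := Finset.range (d () + 1)) fun S hS => ?_
    rw [apply_eq_coeff (∏ i ∈ S, G i) d, apply_eq_coeff (PInf G) d]
    exact (coeff_PInf hG hS).symm
  exact h

lemma tprod_PInf {G : ℕ → PowerSeries ℂ} (hG : Tame G) : ∏' i, G i = PInf G :=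
  (hasProd_PInf hG).tprod_eq

lemma hasSum_mk (F : ℕ → PowerSeries ℂ) (hF : ∀ k j : ℕ, k < j → coeff k (F j) = 0) :
    HasSum F (PowerSeries.mk fun k => ∑ j ∈ Finset.range (k+1), coeff k (F j)) := by
  have h : Tendsto (fun S : Finset ℕ => ∑ j ∈ S, F j) atTop
      (nhds (PowerSeries.mk fun k => ∑ j ∈ Finset.range (k+1), coeff k (F j))) := by
    refine tendsto_pi_nhds.mpr fun d => ?_
    refine tendsto_atTop_of_eventually_const (i₀ := Finset.range (d () + 1)) fun S hS => ?_
    rw [apply_eq_coeff (∑ j ∈ S, F j) d,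
      apply_eq_coeff (PowerSeries.mk fun k => ∑ j ∈ Finset.range (k+1), coeff k (F j)) d,
      map_sum, PowerSeries.coeff_mk]
    exact (Finset.sum_subset hS fun j _ hj =>
      hF (d ()) j (by simp only [Finset.mem_range, not_lt] at hj; omega)).symm
  exact h

lemma PInf_mul {G H : ℕ → PowerSeries ℂ} (hG : Tame G) (hH : Tame H) :
    PInf G * PInf H = PInf fun i => G i * H i := by
  ext n
  have hrange : ∀ k ≤ n, Finset.range (k+1) ⊆ Finset.range (n+1) :=
    fun k hk => Finset.range_subset_range.mpr (by omega)
  calc coeff n (PInf G * PInf H)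
      = coeff n ((∏ i ∈ Finset.range (n+1), G i) * ∏ i ∈ Finset.range (n+1), H i) :=
        coeff_mul_congr (fun k hk => coeff_PInf hG (hrange k hk))
          (fun k hk => coeff_PInf hH (hrange k hk))
    _ = coeff n (∏ i ∈ Finset.range (n+1), (G i * H i)) := by rw [Finset.prod_mul_distrib]
    _ = coeff n (PInf fun i => G i * H i) := by rw [PInf, PowerSeries.coeff_mk]


noncomputable def Tg (m j : ℕ) : ℕ → PowerSeries ℂ :=
  fun i => ∑ t ∈ Finset.range m, (X : PowerSeries ℂ) ^ ((j + 1 + i) * t)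

lemma tame_one_sub (c : ℕ → ℕ) (hc : ∀ i, i < c i) : Tame fun i => 1 - X ^ (c i) := by
  intro i k hk
  rw [map_sub, PowerSeries.coeff_X_pow, if_neg (by have := hc i; omega), sub_zero]

lemma tame_Tg (m j : ℕ) (hm : 1 ≤ m) : Tame (Tg m j) := by
  intro i k hk
  rw [Tg, map_sum, Finset.sum_eq_single_of_mem 0 (Finset.mem_range.mpr (by omega))]
  · rw [mul_zero, pow_zero]
  · intro t ht ht0
    rw [PowerSeries.coeff_X_pow, if_neg]
    have h1 : j + 1 + i ≤ (j + 1 + i) * t := Nat.le_mul_of_pos_right _ (by omega)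
    omega

lemma Tg_mul (m j i : ℕ) :
    Tg m j i * (1 - X ^ (j + 1 + i)) = 1 - X ^ (m * (j + 1 + i)) := by
  have h := geom_sum_mul_neg ((X : PowerSeries ℂ) ^ (j + 1 + i)) m
  simp only [← pow_mul] at h
  rw [Nat.mul_comm (j + 1 + i) m] at h
  rw [Tg]
  exact h

lemma pochInf_eq_PInf1 (m j : ℕ) (hm : 1 ≤ m) :
    pochInf (q ^ (m * (j + 1))) (q ^ m) = PInf fun i => 1 - X ^ (m * (j + 1 + i)) := by
  have h1 : ∀ i : ℕ, 1 - q ^ (m * (j + 1)) * (q ^ m) ^ i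
      = 1 - (X : PowerSeries ℂ) ^ (m * (j + 1 + i)) := by
    intro i
    rw [q_eq, ← pow_mul, ← pow_add, show m * (j + 1) + m * i = m * (j + 1 + i) by ring]
  rw [pochInf, tprod_congr h1, tprod_PInf (tame_one_sub _ fun i => by
    have : j + 1 + i ≤ m * (j + 1 + i) := Nat.le_mul_of_pos_left _ (by omega)
    omega)]

lemma pochInf_eq_PInf2 (j : ℕ) :
    pochInf (q ^ (j + 1)) q = PInf fun i => 1 - X ^ (j + 1 + i) := by
  have h1 : ∀ i : ℕ, 1 - q ^ (j + 1) * q ^ i = 1 - (X : PowerSeries ℂ) ^ (j + 1 + i) := by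
    intro i
    rw [q_eq, ← pow_add]
  rw [pochInf, tprod_congr h1, tprod_PInf (tame_one_sub _ fun i => by omega)]

lemma constCoeff_P2 (j : ℕ) :
    constantCoeff (PInf fun i => 1 - X ^ (j + 1 + i)) ≠ 0 := by
  rw [← PowerSeries.coeff_zero_eq_constantCoeff_apply, PInf, PowerSeries.coeff_mk,
    Finset.range_one, Finset.prod_singleton, map_sub, PowerSeries.coeff_X_pow,
    if_neg (by omega), sub_zero]
  simp

lemma term_eq (m j : ℕ) (hm : 1 ≤ m) :
    q ^ (m * j) * pochInf (q ^ (m * (j + 1))) (q ^ m) * (pochInf (q ^ (j + 1)) q)⁻¹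
      = PInf (Tg m j) * X ^ (m * j) := by
  rw [pochInf_eq_PInf1 m j hm, pochInf_eq_PInf2 j, q_eq]
  have key : PInf (fun i => 1 - (X : PowerSeries ℂ) ^ (m * (j + 1 + i)))
      = PInf (Tg m j) * PInf (fun i => 1 - X ^ (j + 1 + i)) := by
    rw [PInf_mul (tame_Tg m j hm) (tame_one_sub _ fun i => by omega)]
    exact congrArg PInf (funext fun i => (Tg_mul m j i).symm)
  have h2 : (PInf fun i => 1 - (X : PowerSeries ℂ) ^ (j + 1 + i)) *
      (PInf fun i => 1 - (X : PowerSeries ℂ) ^ (j + 1 + i))⁻¹ = 1 :=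
    PowerSeries.mul_inv_cancel _ (constCoeff_P2 j)
  calc (X : PowerSeries ℂ) ^ (m * j) * PInf (fun i => 1 - X ^ (m * (j + 1 + i))) *
        (PInf fun i => 1 - X ^ (j + 1 + i))⁻¹
      = PInf (Tg m j) * X ^ (m * j) * ((PInf fun i => 1 - (X : PowerSeries ℂ) ^ (j + 1 + i)) *
          (PInf fun i => 1 - X ^ (j + 1 + i))⁻¹) := by rw [key]; ring
    _ = PInf (Tg m j) * X ^ (m * j) := by rw [h2, mul_one]


lemma multiset_sum_eq_toFinset (t : Multiset ℕ) :
    t.sum = ∑ b ∈ t.toFinset, t.count b * b := by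
  conv_lhs => rw [← Multiset.toFinset_sum_count_nsmul_eq t]
  rw [← Multiset.coe_sumAddMonoidHom, map_sum]
  simp [Multiset.nsmul_singleton, Multiset.sum_replicate, smul_eq_mul]

lemma sum_eq (j n : ℕ) (t : Multiset ℕ) (ht : t.sum = n) (hp : ∀ b ∈ t, j + 1 ≤ b) :
    ∑ i ∈ Finset.range (n + 1), (j + 1 + i) * t.count (j + 1 + i) = n := by
  classical
  have h0 := multiset_sum_eq_toFinset t
  have hsub : t.toFinset ⊆ (Finset.range (n + 1)).image (fun i => j + 1 + i) := by
    intro b hb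
    rw [Multiset.mem_toFinset] at hb
    have h1 := hp b hb
    have h2 : b ≤ n := ht ▸ Multiset.single_le_sum (fun x _ => Nat.zero_le x) _ hb
    exact Finset.mem_image.mpr ⟨b - (j + 1), Finset.mem_range.mpr (by omega), by omega⟩
  have h1 : ∑ b ∈ t.toFinset, t.count b * b
      = ∑ b ∈ (Finset.range (n + 1)).image (fun i => j + 1 + i), t.count b * b :=
    Finset.sum_subset hsub (fun b _ hb => by
      rw [Multiset.count_eq_zero.mpr (fun hmem => hb (Multiset.mem_toFinset.mpr hmem)), zero_mul])
  rw [Finset.sum_image (by intro a _ b _ hab; exact Nat.add_left_cancel hab)] at h1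
  calc ∑ i ∈ Finset.range (n + 1), (j + 1 + i) * t.count (j + 1 + i)
      = ∑ i ∈ Finset.range (n + 1), t.count (j + 1 + i) * (j + 1 + i) := by
        exact Finset.sum_congr rfl fun i _ => Nat.mul_comm _ _
    _ = ∑ b ∈ t.toFinset, t.count b * b := h1.symm
    _ = n := by rw [← h0, ht]

noncomputable def toL (j n : ℕ) (t : Multiset ℕ) (ht : t.sum = n) (hp : ∀ b ∈ t, j + 1 ≤ b) :
    ℕ →₀ ℕ :=
  Finsupp.onFinset (Finset.range (n + 1)) (fun i => (j + 1 + i) * t.count (j + 1 + i)) (by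
    intro i hne
    have hmem : (j + 1 + i) ∈ t := by
      by_contra h
      apply hne
      simp [Multiset.count_eq_zero.mpr h]
    have h2 := Multiset.single_le_sum (fun x _ => Nat.zero_le x) _ hmem
    rw [ht] at h2
    exact Finset.mem_range.mpr (by omega))

lemma toL_apply (j n : ℕ) (t : Multiset ℕ) (ht : t.sum = n) (hp : ∀ b ∈ t, j + 1 ≤ b) (i : ℕ) :
    toL j n t ht hp i = (j + 1 + i) * t.count (j + 1 + i) := rfl

def goodPred (m j n : ℕ) (l : ℕ →₀ ℕ) : Prop :=
  ∀ i ∈ Finset.range (n + 1), ∃ t ∈ Finset.range m, l i = (j + 1 + i) * t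

instance goodPredDec (m j n : ℕ) : DecidablePred (goodPred m j n) := fun l => by
  unfold goodPred; infer_instance

noncomputable def goodFinset (m j n : ℕ) : Finset (ℕ →₀ ℕ) :=
  (Finset.finsuppAntidiag (Finset.range (n + 1)) n).filter (goodPred m j n)

lemma toL_mem (m j n : ℕ) (hm : 2 ≤ m)
    (t : {t : Multiset ℕ // t.sum = n ∧ ∀ b ∈ t, j + 1 ≤ b ∧ t.count b < m}) :
    toL j n t.1 t.2.1 (fun b hb => (t.2.2 b hb).1) ∈ goodFinset m j n := by
  refine Finset.mem_filter.mpr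
    ⟨Finset.mem_finsuppAntidiag.mpr ⟨?_, Finsupp.support_onFinset_subset⟩, ?_⟩
  · exact sum_eq j n t.1 t.2.1 (fun b hb => (t.2.2 b hb).1)
  · intro i _
    refine ⟨t.1.count (j + 1 + i), Finset.mem_range.mpr ?_, rfl⟩
    by_cases hmem : (j + 1 + i) ∈ t.1
    · exact (t.2.2 _ hmem).2
    · rw [Multiset.count_eq_zero.mpr hmem]; omega

lemma toL_inj (m j n : ℕ) (hm : 2 ≤ m) :
    Function.Injective (fun t : {t : Multiset ℕ // t.sum = n ∧ ∀ b ∈ t, j + 1 ≤ b ∧ t.count b < m} =>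
      (⟨toL j n t.1 t.2.1 (fun b hb => (t.2.2 b hb).1), toL_mem m j n hm t⟩ :
        {l // l ∈ goodFinset m j n})) := by
  rintro ⟨t₁, ht₁⟩ ⟨t₂, ht₂⟩ h
  simp only [Subtype.mk.injEq] at h
  refine Subtype.ext (Multiset.ext.mpr fun b => ?_)
  by_cases hb : j + 1 ≤ b
  · have hi := DFunLike.congr_fun h (b - (j + 1))
    rw [toL_apply, toL_apply] at hi
    have hjb : j + 1 + (b - (j + 1)) = b := by omega
    rw [hjb] at hi
    exact Nat.eq_of_mul_eq_mul_left (by omega) hi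
  · rw [Multiset.count_eq_zero.mpr (fun hmem => hb (ht₁.2 b hmem).1),
      Multiset.count_eq_zero.mpr (fun hmem => hb (ht₂.2 b hmem).1)]

lemma toL_surj (m j n : ℕ) (hm : 2 ≤ m) :
    Function.Surjective (fun t : {t : Multiset ℕ // t.sum = n ∧ ∀ b ∈ t, j + 1 ≤ b ∧ t.count b < m} =>
      (⟨toL j n t.1 t.2.1 (fun b hb => (t.2.2 b hb).1), toL_mem m j n hm t⟩ :
        {l // l ∈ goodFinset m j n})) := by
  rintro ⟨l, hl⟩
  rw [goodFinset, Finset.mem_filter] at hl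
  obtain ⟨hl1, hl2⟩ := hl
  rw [Finset.mem_finsuppAntidiag] at hl1
  obtain ⟨hsum, hsupp⟩ := hl1
  set T : Multiset ℕ :=
    ∑ i ∈ Finset.range (n + 1), Multiset.replicate (l i / (j + 1 + i)) (j + 1 + i) with hT
  have hdvd : ∀ i ∈ Finset.range (n + 1), (j + 1 + i) * (l i / (j + 1 + i)) = l i := by
    intro i hi
    obtain ⟨t, _, hlt⟩ := hl2 i hi
    rw [hlt, Nat.mul_div_cancel_left _ (by omega)]
  have hcount : ∀ b, T.count b
      = ∑ i ∈ Finset.range (n + 1), if j + 1 + i = b then l i / (j + 1 + i) else 0 := by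
    intro b
    rw [hT, Multiset.count_sum']
    exact Finset.sum_congr rfl fun i _ => Multiset.count_replicate _ _ _
  have hcount2 : ∀ i ∈ Finset.range (n + 1), T.count (j + 1 + i) = l i / (j + 1 + i) := by
    intro i hi
    rw [hcount, Finset.sum_eq_single_of_mem i hi (fun i' _ hne => if_neg (by omega)),
      if_pos rfl]
  have hcount3 : ∀ b, ¬ (j + 1 ≤ b ∧ b ≤ j + 1 + n) → T.count b = 0 := by
    intro b hb
    rw [hcount, Finset.sum_eq_zero]
    intro i hi
    rw [Finset.mem_range] at hi
    exact if_neg (by omega)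
  have hTsum : T.sum = n := by
    rw [hT, Multiset.sum_sum]
    calc ∑ i ∈ Finset.range (n + 1), (Multiset.replicate (l i / (j + 1 + i)) (j + 1 + i)).sum
        = ∑ i ∈ Finset.range (n + 1), l i := by
          refine Finset.sum_congr rfl fun i hi => ?_
          rw [Multiset.sum_replicate, smul_eq_mul, Nat.mul_comm, hdvd i hi]
      _ = n := hsum
  have hTmem : ∀ b ∈ T, ∃ i ∈ Finset.range (n + 1), b = j + 1 + i := by
    intro b hb
    rw [hT] at hb
    obtain ⟨i, hi, hbi⟩ := Multiset.mem_sum.mp hb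
    exact ⟨i, hi, Multiset.eq_of_mem_replicate hbi⟩
  have hTcond : ∀ b ∈ T, j + 1 ≤ b ∧ T.count b < m := by
    intro b hb
    obtain ⟨i, hi, rfl⟩ := hTmem b hb
    refine ⟨by omega, ?_⟩
    rw [hcount2 i hi]
    obtain ⟨t, htm, hlt⟩ := hl2 i hi
    rw [hlt, Nat.mul_div_cancel_left _ (by omega)]
    exact Finset.mem_range.mp htm
  refine ⟨⟨T, hTsum, hTcond⟩, Subtype.ext (Finsupp.ext fun i => ?_)⟩
  rw [toL_apply]
  by_cases hi : i ∈ Finset.range (n + 1)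
  · rw [hcount2 i hi, hdvd i hi]
  · have hl0 : l i = 0 := by
      by_contra h0
      exact hi (hsupp (Finsupp.mem_support_iff.mpr h0))
    rw [Finset.mem_range] at hi
    rw [hcount3 (j + 1 + i) (by omega), mul_zero, hl0]

lemma finite_cond (m j n : ℕ) (hm : 2 ≤ m) :
    Finite {t : Multiset ℕ // t.sum = n ∧ ∀ b ∈ t, j + 1 ≤ b ∧ t.count b < m} :=
  Finite.of_injective _ (toL_inj m j n hm)

lemma card_aux (m j n : ℕ) (hm : 2 ≤ m) :
    Nat.card {t : Multiset ℕ // t.sum = n ∧ ∀ b ∈ t, j + 1 ≤ b ∧ t.count b < m}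
      = (goodFinset m j n).card := by
  rw [← Nat.card_eq_finsetCard]
  exact Nat.card_congr (Equiv.ofBijective _ ⟨toL_inj m j n hm, toL_surj m j n hm⟩)

lemma hprod_lemma (m j n : ℕ) (l : ℕ →₀ ℕ) :
    (∏ i ∈ Finset.range (n + 1), coeff (l i) (Tg m j i))
      = if goodPred m j n l then (1 : ℂ) else 0 := by
  have hinner : ∀ i ∈ Finset.range (n + 1),
      coeff (l i) (Tg m j i)
        = if ∃ t ∈ Finset.range m, l i = (j + 1 + i) * t then 1 else 0 := by
    intro i _
    rw [Tg, map_sum]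
    simp only [PowerSeries.coeff_X_pow]
    by_cases h : ∃ t ∈ Finset.range m, l i = (j + 1 + i) * t
    · obtain ⟨t₀, ht₀m, ht₀⟩ := h
      rw [Finset.sum_eq_single_of_mem t₀ ht₀m (fun t _ hne => if_neg (fun hcon =>
          hne (Nat.eq_of_mul_eq_mul_left (by omega) (hcon.symm.trans ht₀)))),
        if_pos ht₀, if_pos ⟨t₀, ht₀m, ht₀⟩]
    · rw [if_neg h, Finset.sum_eq_zero]
      intro t ht
      exact if_neg fun hc => h ⟨t, ht, hc⟩
  rw [Finset.prod_congr rfl hinner, Finset.prod_ite_zero, Finset.prod_const_one]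
  exact if_congr (by rw [goodPred]) rfl rfl

lemma coeff_PInf_Tg (m j : ℕ) (hm : 2 ≤ m) (n : ℕ) :
    coeff n (PInf (Tg m j)) =
      (Nat.card {t : Multiset ℕ // t.sum = n ∧ ∀ b ∈ t, j + 1 ≤ b ∧ t.count b < m} : ℂ) := by
  rw [PInf, PowerSeries.coeff_mk, PowerSeries.coeff_prod,
    Finset.sum_congr rfl (fun l _ => hprod_lemma m j n l), Finset.sum_ite,
    Finset.sum_const_zero, add_zero, Finset.sum_const, nsmul_eq_mul, mul_one,
    card_aux m j n hm]
  rfl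

lemma finite_S2 (m j k : ℕ) (hm : 2 ≤ m) :
    Finite {t : Multiset ℕ // t.sum + m * j = k ∧ ∀ b ∈ t, j + 1 ≤ b ∧ t.count b < m} := by
  classical
  by_cases h : m * j ≤ k
  · have hfin : Finite {t : Multiset ℕ //
        t.sum = k - m * j ∧ ∀ b ∈ t, j + 1 ≤ b ∧ t.count b < m} := finite_cond m j (k - m * j) hm
    exact Finite.of_equiv _ (Equiv.subtypeEquivRight
      (p := fun t : Multiset ℕ => t.sum = k - m * j ∧ ∀ b ∈ t, j + 1 ≤ b ∧ t.count b < m)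
      (q := fun t : Multiset ℕ => t.sum + m * j = k ∧ ∀ b ∈ t, j + 1 ≤ b ∧ t.count b < m)
      (fun t => by
      constructor
      · rintro ⟨h1, h2⟩; exact ⟨by omega, h2⟩
      · rintro ⟨h1, h2⟩; exact ⟨by omega, h2⟩))
  · have hempty : IsEmpty {t : Multiset ℕ //
        t.sum + m * j = k ∧ ∀ b ∈ t, j + 1 ≤ b ∧ t.count b < m} := by
      refine ⟨fun x => ?_⟩
      obtain ⟨t, ht, _⟩ := x
      exact h (by omega)
    infer_instance

lemma coeff_term (m : ℕ) (hm : 2 ≤ m) (j k : ℕ) :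
    coeff k (PInf (Tg m j) * X ^ (m * j))
      = (Nat.card {t : Multiset ℕ //
          t.sum + m * j = k ∧ ∀ b ∈ t, j + 1 ≤ b ∧ t.count b < m} : ℂ) := by
  rw [PowerSeries.coeff_mul_X_pow']
  by_cases h : m * j ≤ k
  · rw [if_pos h, coeff_PInf_Tg m j hm (k - m * j)]
    norm_cast
    exact Nat.card_congr (Equiv.subtypeEquivRight
      (p := fun t : Multiset ℕ => t.sum = k - m * j ∧ ∀ b ∈ t, j + 1 ≤ b ∧ t.count b < m)
      (q := fun t : Multiset ℕ => t.sum + m * j = k ∧ ∀ b ∈ t, j + 1 ≤ b ∧ t.count b < m)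
      (fun t => by
      constructor
      · rintro ⟨h1, h2⟩; exact ⟨by omega, h2⟩
      · rintro ⟨h1, h2⟩; exact ⟨by omega, h2⟩))
  · rw [if_neg h]
    have hempty : IsEmpty {t : Multiset ℕ //
        t.sum + m * j = k ∧ ∀ b ∈ t, j + 1 ≤ b ∧ t.count b < m} := by
      refine ⟨fun x => ?_⟩
      obtain ⟨t, ht, _⟩ := x
      exact h (by omega)
    rw [Nat.card_of_isEmpty, Nat.cast_zero]


lemma nat_card_sigma {N : ℕ} (f : Fin N → Type) [∀ i, Finite (f i)] :
    Nat.card (Σ i, f i) = ∑ i : Fin N, Nat.card (f i) := by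
  letI : ∀ i, Fintype (f i) := fun i => Fintype.ofFinite _
  simp [Nat.card_eq_fintype_card, Fintype.card_sigma]

lemma mem_addrep (m j : ℕ) (t : Multiset ℕ) (hm : 2 ≤ m) :
    j ∈ t + Multiset.replicate m j :=
  Multiset.mem_add.mpr (Or.inr (Multiset.mem_replicate.mpr ⟨by omega, rfl⟩))

lemma min_addrep (m j : ℕ) (t : Multiset ℕ) (hc : ∀ b ∈ t, j + 1 ≤ b) :
    ∀ b ∈ t + Multiset.replicate m j, j ≤ b := fun b hb => by
  rcases Multiset.mem_add.mp hb with h | h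
  · have := hc b h; omega
  · rw [Multiset.eq_of_mem_replicate h]

lemma add_replicate_mem (m : ℕ) (hm : 2 ≤ m) (j k : ℕ) (t : Multiset ℕ)
    (ht : t.sum + m * j = k) (hc : ∀ b ∈ t, j + 1 ≤ b ∧ t.count b < m) :
    (t + Multiset.replicate m j).sum = k ∧
      ∃ a ∈ t + Multiset.replicate m j, (t + Multiset.replicate m j).count a = m ∧
        (∀ b ∈ t + Multiset.replicate m j, a ≤ b) ∧
        ∀ b ∈ t + Multiset.replicate m j, b ≠ a → (t + Multiset.replicate m j).count b < m := by
  have hjt : j ∉ t := fun hmem => by have := (hc j hmem).1; omega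
  have hcountj : (t + Multiset.replicate m j).count j = m := by
    rw [Multiset.count_add, Multiset.count_eq_zero.mpr hjt, Multiset.count_replicate_self,
      zero_add]
  refine ⟨?_, j, mem_addrep m j t hm, hcountj, min_addrep m j t (fun b hb => (hc b hb).1), ?_⟩
  · rw [Multiset.sum_add, Multiset.sum_replicate, smul_eq_mul, ht]
  · intro b hb hbne
    have hbt : b ∈ t := by
      rcases Multiset.mem_add.mp hb with h | h
      · exact h
      · exact absurd (Multiset.eq_of_mem_replicate h) hbne
    rw [Multiset.count_add, Multiset.count_replicate, if_neg (fun hh => hbne hh.symm), add_zero]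
    exact (hc b hbt).2

lemma Dm_eq_sum (m k : ℕ) (hm : 2 ≤ m) :
    Nat.card {s : Multiset ℕ // s.sum = k ∧
        ∃ a ∈ s, s.count a = m ∧ (∀ b ∈ s, a ≤ b) ∧ ∀ b ∈ s, b ≠ a → s.count b < m}
      = ∑ j ∈ Finset.range (k + 1),
        Nat.card {t : Multiset ℕ // t.sum + m * j = k ∧ ∀ b ∈ t, j + 1 ≤ b ∧ t.count b < m} := by
  letI hfin : ∀ jf : Fin (k + 1), Finite {t : Multiset ℕ //
      t.sum + m * (jf : ℕ) = k ∧ ∀ b ∈ t, (jf : ℕ) + 1 ≤ b ∧ t.count b < m} :=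
    fun jf => finite_S2 m (jf : ℕ) k hm
  have e : (Σ jf : Fin (k + 1), {t : Multiset ℕ //
        t.sum + m * (jf : ℕ) = k ∧ ∀ b ∈ t, (jf : ℕ) + 1 ≤ b ∧ t.count b < m})
      ≃ {s : Multiset ℕ // s.sum = k ∧
        ∃ a ∈ s, s.count a = m ∧ (∀ b ∈ s, a ≤ b) ∧ ∀ b ∈ s, b ≠ a → s.count b < m} := by
    refine Equiv.ofBijective (fun p =>
      ⟨p.2.1 + Multiset.replicate m (p.1 : ℕ),
        add_replicate_mem m hm (p.1 : ℕ) k p.2.1 p.2.2.1 p.2.2.2⟩) ⟨?_, ?_⟩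
    · rintro ⟨j₁, t₁, ht₁, hc₁⟩ ⟨j₂, t₂, ht₂, hc₂⟩ h
      simp only [Subtype.mk.injEq] at h
      have h12 : (j₁ : ℕ) ≤ (j₂ : ℕ) :=
        min_addrep m _ t₁ (fun b hb => (hc₁ b hb).1) _
          (by rw [h]; exact mem_addrep m _ t₂ hm)
      have h21 : (j₂ : ℕ) ≤ (j₁ : ℕ) :=
        min_addrep m _ t₂ (fun b hb => (hc₂ b hb).1) _
          (by rw [← h]; exact mem_addrep m _ t₁ hm)
      obtain rfl : j₁ = j₂ := Fin.ext (by omega)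
      obtain rfl : t₁ = t₂ := add_right_cancel h
      rfl
    · rintro ⟨s, hsum, a, hamem, hacount, hamin, haother⟩
      have hrep_le : Multiset.replicate m a ≤ s := Multiset.le_iff_count.mpr (fun b => by
        rw [Multiset.count_replicate]
        split_ifs with hab
        · subst hab; omega
        · omega)
      obtain ⟨u, hu⟩ := Multiset.le_iff_exists_add.mp hrep_le
      have hsum' : m * a + u.sum = k := by
        rw [hu, Multiset.sum_add, Multiset.sum_replicate, smul_eq_mul] at hsum
        exact hsum
      have hau : a ∉ u := by
        intro hmem
        have h1 := hacount
        rw [hu, Multiset.count_add, Multiset.count_replicate_self] at h1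
        have h2 := Multiset.count_pos.mpr hmem
        omega
      have hma : m * a ≤ k := by omega
      have hak : a ≤ k := by
        have h' : a ≤ m * a := Nat.le_mul_of_pos_left a (by omega)
        omega
      refine ⟨⟨⟨a, Nat.lt_succ_of_le hak⟩, ⟨u, show u.sum + m * a = k by omega, ?_⟩⟩, ?_⟩
      · intro b hb
        have hbs : b ∈ s := by rw [hu]; exact Multiset.mem_add.mpr (Or.inr hb)
        have hba : b ≠ a := fun h => hau (h ▸ hb)
        have h1 := hamin b hbs
        have h2 := haother b hbs hba
        rw [hu, Multiset.count_add, Multiset.count_replicate,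
          if_neg (fun hh => hba hh.symm), zero_add] at h2
        exact ⟨show a + 1 ≤ b by omega, h2⟩
      · refine Subtype.ext ?_
        show u + Multiset.replicate m a = s
        rw [add_comm]
        exact hu.symm
  rw [← Nat.card_congr e, nat_card_sigma]
  exact Fin.sum_univ_eq_sum_range
    (fun j => Nat.card {t : Multiset ℕ //
      t.sum + m * j = k ∧ ∀ b ∈ t, j + 1 ≤ b ∧ t.count b < m}) (k + 1)


lemma vanish_L (m k n : ℕ) (h : k < n) :
    coeff k ((Dm m n : PowerSeries ℂ) * q ^ n) = 0 := by
  rw [q_eq, ← map_natCast C (Dm m n), PowerSeries.coeff_C_mul, PowerSeries.coeff_X_pow,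
    if_neg (by omega), mul_zero]

lemma vanish_R (m : ℕ) (hm : 2 ≤ m) (k j : ℕ) (h : k < j) :
    coeff k (PInf (Tg m j) * X ^ (m * j)) = 0 := by
  rw [PowerSeries.coeff_mul_X_pow', if_neg]
  have h1 : j ≤ m * j := Nat.le_mul_of_pos_left j (by omega)
  omega

end DmAux

open DmAux

/-- Generating function of `Dm`:
`∑ Dm(n) qⁿ = ∑_{j≥0} q^{mj} (q^{m(j+1)};q^m)_∞ / (q^{j+1};q)_∞`. -/
theorem Dm_genfun (m : ℕ) (hm : 2 ≤ m) :
    ∑' n : ℕ, (Dm m n : PowerSeries ℂ) * q ^ n =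
    ∑' j : ℕ, q ^ (m * j) * pochInf (q ^ (m * (j + 1))) (q ^ m) *
      (pochInf (q ^ (j + 1)) q)⁻¹ := by
  have hL := hasSum_mk (fun n => (Dm m n : PowerSeries ℂ) * q ^ n)
    (fun k n h => vanish_L m k n h)
  have hR := hasSum_mk (fun j => PInf (Tg m j) * X ^ (m * j))
    (fun k j h => vanish_R m hm k j h)
  rw [hL.tsum_eq, tsum_congr (fun j => term_eq m j (by omega)), hR.tsum_eq]
  ext k
  rw [PowerSeries.coeff_mk, PowerSeries.coeff_mk]
  have hLHS : ∑ n ∈ Finset.range (k + 1), coeff k ((Dm m n : PowerSeries ℂ) * q ^ n)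
      = (Dm m k : ℂ) := by
    rw [Finset.sum_congr rfl (fun n _ => by
      rw [q_eq, ← map_natCast C (Dm m n), PowerSeries.coeff_C_mul,
        PowerSeries.coeff_X_pow])]
    simp only [mul_ite, mul_one, mul_zero]
    rw [Finset.sum_ite_eq, if_pos (Finset.self_mem_range_succ k)]
  have hRHS : ∑ j ∈ Finset.range (k + 1), coeff k (PInf (Tg m j) * X ^ (m * j))
      = (Dm m k : ℂ) := by
    rw [Finset.sum_congr rfl (fun j _ => coeff_term m hm j k), ← Nat.cast_sum]
    show _ = ((Dm m k : ℕ) : ℂ)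
    rw [Dm, Dm_eq_sum m k hm]
  rw [hLHS, hRHS]
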